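/- Let (X,S) be a non-degenerate involutive solution of class m. For x ∈ X with t = π(x), the element π^{-1}(t^m) is the frozen element θ = T^{m-1}(x)·T^{m-2}(x)⋯T(x)·x of length m ending with x, and both π^{-1}(t^m) and π^{-1}(t^{-m}) act trivially on Z^X; moreover π^{-1}(t^{-m}) = θ^{-1}. -/

import Mathlib

/-- Relators `x·y·(g_x(y)·f_y(x))⁻¹` of the structure group `G(X,S)`. -/
def structureGroupRels {X : Type*} (g f : X → Equiv.Perm X) : Set (FreeGroup X) :=
  {r | ∃ x y : X, r = FreeGroup.of x * FreeGroup.of y *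
    (FreeGroup.of (g x y) * FreeGroup.of (f y x))⁻¹}

/-- The generator `t_x` of `ℤ^X` (written multiplicatively). -/
def tgen {X : Type*} [DecidableEq X] (x : X) : Multiplicative (X → ℤ) :=
  Multiplicative.ofAdd (Pi.single x 1)

/-- Let `(X,S)` be a non-degenerate involutive solution of class
`m` with structure group `G(X,S)`, bijective 1-cocycle `π` and action `ρ` as in
the Etingof–Schedler–Soloviev correspondence. For `x ∈ X` with `t = π(x)`, the
element `π⁻¹(t^m)` is the frozen element `θ = T^{m-1}(x)⋯T(x)·x` of length `m`
ending with `x`; both `π⁻¹(t^m)` and `π⁻¹(t^{-m})` act trivially on `ℤ^X`; and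
`π⁻¹(t^{-m}) = θ⁻¹`. -/
theorem stmt_17 {X : Type*} [Fintype X] [DecidableEq X]
    (g f : X → Equiv.Perm X)
    (invol : ∀ x y : X, (g (g x y) (f y x), f (f y x) (g x y)) = (x, y))
    (T : X → X) (hT : ∀ x : X, T x = (f x)⁻¹ x) (m : ℕ)
    (hclass : ∀ x : X, ((List.range m).map (fun i => f (T^[i] x))).prod = 1)
    (ρ : PresentedGroup (structureGroupRels g f) →* MulAut (Multiplicative (X → ℤ)))
    (hρ : ∀ (x : X) (v : Multiplicative (X → ℤ)),
      ρ (PresentedGroup.of x) v =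
        Multiplicative.ofAdd (fun y => Multiplicative.toAdd v (f x y)))
    (π : PresentedGroup (structureGroupRels g f) ≃ Multiplicative (X → ℤ))
    (hπ1 : π 1 = 1)
    (hπx : ∀ x : X, π (PresentedGroup.of x) = tgen x)
    (hcoc : ∀ a b : PresentedGroup (structureGroupRels g f),
      π (a * b) = ρ b⁻¹ (π a) * π b) :
    ∀ x : X,
      π.symm (tgen x ^ m) =
        (((List.range m).reverse).map
          (fun i => (PresentedGroup.of (T^[i] x) :
            PresentedGroup (structureGroupRels g f)))).prod ∧
      ρ (π.symm (tgen x ^ m)) = 1 ∧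
      ρ (π.symm (tgen x ^ (-(m : ℤ)))) = 1 ∧
      π.symm (tgen x ^ (-(m : ℤ))) =
        ((((List.range m).reverse).map
          (fun i => (PresentedGroup.of (T^[i] x) :
            PresentedGroup (structureGroupRels g f)))).prod)⁻¹ := by
  intro x
  -- abbreviations
  let Θ : ℕ → PresentedGroup (structureGroupRels g f) := fun k =>
    (((List.range k).reverse).map
      (fun i => (PresentedGroup.of (T^[i] x) : PresentedGroup (structureGroupRels g f)))).prod
  let P : ℕ → Equiv.Perm X := fun k => ((List.range k).map (fun i => f (T^[i] x))).prod
  have hΘsucc : ∀ k, Θ (k + 1) = PresentedGroup.of (T^[k] x) * Θ k := by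
    intro k
    show (((List.range (k+1)).reverse).map _).prod = _
    rw [List.range_succ, List.reverse_append]
    simp [Θ]
  have hPsucc : ∀ k, P (k + 1) = P k * f (T^[k] x) := by
    intro k
    show ((List.range (k+1)).map _).prod = _
    rw [List.range_succ]
    simp [P]
  have key : ∀ k : ℕ,
      (∀ v, ρ (Θ k) v =
        Multiplicative.ofAdd (fun y => Multiplicative.toAdd v (P k y)))
      ∧ P k (T^[k] x) = x ∧ π (Θ k) = tgen x ^ k := by
    intro k
    induction k with
    | zero =>
      refine ⟨fun v => ?_, ?_, ?_⟩
      · show ρ 1 v = _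
        simp [P]
      · simp [P]
      · simpa [Θ] using hπ1
    | succ k ih =>
      obtain ⟨ihρ, ihP, ihπ⟩ := ih
      have hρs : ∀ v, ρ (Θ (k+1)) v =
          Multiplicative.ofAdd (fun y => Multiplicative.toAdd v (P (k+1) y)) := by
        intro v
        rw [hΘsucc, map_mul, MulAut.mul_apply, hρ, ihρ]
        refine congrArg _ (funext fun y => ?_)
        rw [hPsucc]
        simp
      have hfT : f (T^[k] x) (T^[k+1] x) = T^[k] x := by
        rw [Function.iterate_succ_apply', hT]
        exact Equiv.apply_symm_apply _ _
      have hPs : P (k+1) (T^[k+1] x) = x := by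
        rw [hPsucc, Equiv.Perm.mul_apply, hfT, ihP]
      refine ⟨hρs, hPs, ?_⟩
      have hact : ρ (Θ k) (tgen x) = tgen (T^[k] x) := by
        rw [ihρ]
        refine congrArg _ (funext fun y => ?_)
        have hiff : (P k) y = x ↔ y = T^[k] x :=
          ⟨fun h => (P k).injective (h.trans ihP.symm), fun h => h ▸ ihP⟩
        simp only [tgen, toAdd_ofAdd, Pi.single_apply, hiff]
      have hinv : ρ (Θ k)⁻¹ (tgen (T^[k] x)) = tgen x := by
        rw [← hact, ← MulAut.mul_apply, ← map_mul, inv_mul_cancel, map_one]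
        rfl
      rw [hΘsucc, hcoc, hπx, hinv, ihπ, pow_succ']
  obtain ⟨hρm, -, hπm⟩ := key m
  have hP1 : P m = 1 := hclass x
  have hρ1 : ρ (Θ m) = 1 := by
    ext v
    rw [MulAut.one_apply, hρm, hP1]
    rfl
  have h1 : π.symm (tgen x ^ m) = Θ m := by
    rw [← hπm, Equiv.symm_apply_apply]
  have hπinv : π (Θ m)⁻¹ = (tgen x ^ m)⁻¹ := by
    have := hcoc (Θ m)⁻¹ (Θ m)
    rw [inv_mul_cancel, hπ1, map_inv, hρ1, hπm] at this
    have h2 : (1 : MulAut (Multiplicative (X → ℤ)))⁻¹ (π (Θ m)⁻¹) = π (Θ m)⁻¹ := rfl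
    rw [h2] at this
    exact eq_inv_of_mul_eq_one_left this.symm
  have hzpow : tgen x ^ (-(m : ℤ)) = (tgen x ^ m)⁻¹ := by
    rw [zpow_neg, zpow_natCast]
  have h4 : π.symm (tgen x ^ (-(m : ℤ))) = (Θ m)⁻¹ := by
    rw [hzpow, ← hπinv, Equiv.symm_apply_apply]
  refine ⟨h1, ?_, ?_, h4⟩
  · rw [h1]; exact hρ1
  · rw [h4, map_inv, hρ1]; rfl
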